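/- Let P ⊂ ℝ² be a finite set and let σ := |P|^{-1} · (counting measure on P) be the normalised counting measure on P. Let t, δ > 0, n ∈ ℕ, and C ≥ 1, and suppose that I_t^δ(σ^n) ≤ C. Then the number of 2n-tuples (p₁,…,p_n,q₁,…,q_n) ∈ P^{2n} with |(p₁ + ⋯ + p_n) − (q₁ + ⋯ + q_n)| ≤ δ is at most C' · C · δ^t |P|^{2n}, where C' > 0 is an absolute constant. -/

import Mathlib

open MeasureTheory Metric Set
open scoped ENNReal

noncomputable section

/-- The plane `ℝ²` with the Euclidean metric. -/
abbrev E2 : Type := EuclideanSpace ℝ (Fin 2)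

/-- The compact parabola `ℙ = {(x, x²) : x ∈ [-1,1]}`. -/
def parab : Set E2 := {p : E2 | p 0 ∈ Set.Icc (-1 : ℝ) 1 ∧ p 1 = (p 0) ^ 2}

/-- `ψ` is a standard approximate-identity profile on `ℝ²`: radially decreasing,
`∫ ψ = 1`, and `1_{B(1/2)} ≤ ψ ≤ 1_{B(1)}`. -/
def IsApproxId (ψ : E2 → ℝ) : Prop :=
  (∀ x y : E2, ‖x‖ ≤ ‖y‖ → ψ y ≤ ψ x) ∧
  (∫ x, ψ x = 1) ∧
  (∀ x : E2, ‖x‖ ≤ 1/2 → 1 ≤ ψ x) ∧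
  (∀ x : E2, ψ x ≤ 1) ∧
  (∀ x : E2, 0 ≤ ψ x) ∧
  (∀ x : E2, 1 < ‖x‖ → ψ x = 0)

/-- The mollified density `ν_δ(x) = (ν ∗ ψ_δ)(x)`, where `ψ_δ(x) = δ^{-2} ψ(x/δ)`. -/
def mollify (ψ : E2 → ℝ) (δ : ℝ) (ν : Measure E2) (x : E2) : ℝ :=
  ∫ y, (δ ^ 2)⁻¹ * ψ (δ⁻¹ • (x - y)) ∂ν

/-- The mollified Riesz energy `I_u^δ(ν) = ∬ |x−y|^{-u} ν_δ(x) ν_δ(y) dx dy`. -/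
def mollE (ψ : E2 → ℝ) (u δ : ℝ) (ν : Measure E2) : ℝ≥0∞ :=
  ∫⁻ x, ∫⁻ y, edist x y ^ (-u) * ENNReal.ofReal (mollify ψ δ ν x) *
    ENNReal.ofReal (mollify ψ δ ν y) ∂volume ∂volume

/-- Convolution of two measures on `ℝ²`: the push-forward of `μ × ν` under addition. -/
def mconv (μ ν : Measure E2) : Measure E2 :=
  Measure.map (fun p : E2 × E2 => p.1 + p.2) (μ.prod ν)

/-- The `k`-fold self-convolution `ν^k`; `ν^0 := δ₀`. -/
def convPow (ν : Measure E2) : ℕ → Measure E2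
  | 0 => Measure.dirac 0
  | k + 1 => mconv (convPow ν k) ν

/-- The normalised counting measure on the finite set `P`. -/
def countMeas (P : Finset E2) : Measure E2 :=
  (P.card : ℝ≥0∞)⁻¹ • ∑ p ∈ P, Measure.dirac p

/-! ### Auxiliary lemmas -/

lemma prod_smul_left' (c : ℝ≥0∞) (μ ν : Measure E2) [SFinite μ] [SFinite ν] :
    (c • μ).prod ν = c • (μ.prod ν) := by
  ext s hs
  rw [Measure.prod_apply hs, Measure.smul_apply, Measure.prod_apply hs,
    lintegral_smul_measure, smul_eq_mul]

lemma prod_smul_right' (c : ℝ≥0∞) (μ ν : Measure E2) [SFinite μ] [SFinite ν] :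
    μ.prod (c • ν) = c • (μ.prod ν) := by
  ext s hs
  simp only [Measure.prod_apply hs, Measure.smul_apply, smul_eq_mul]
  exact lintegral_const_mul c (measurable_measure_prodMk_left hs)

lemma sfinite_fsum {ι : Type} (s : Finset ι) (μ : ι → Measure E2) [∀ i, SFinite (μ i)] :
    SFinite (∑ i ∈ s, μ i) := by
  rw [← Measure.sum_coe_finset]
  infer_instance

lemma prod_fsum_left {ι : Type} (s : Finset ι) (μ : ι → Measure E2) [∀ i, SFinite (μ i)]
    (ν : Measure E2) [SFinite ν] :
    (∑ i ∈ s, μ i).prod ν = ∑ i ∈ s, (μ i).prod ν := by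
  classical
  induction s using Finset.induction with
  | empty => simp
  | insert _ _ h ih =>
      haveI := sfinite_fsum ‹_› μ
      rw [Finset.sum_insert h, Finset.sum_insert h, ← ih, Measure.add_prod]

lemma prod_fsum_right {ι : Type} (s : Finset ι) (μ : ι → Measure E2) [∀ i, SFinite (μ i)]
    (ν : Measure E2) [SFinite ν] :
    ν.prod (∑ i ∈ s, μ i) = ∑ i ∈ s, ν.prod (μ i) := by
  classical
  induction s using Finset.induction with
  | empty => simp
  | insert _ _ h ih =>
      haveI := sfinite_fsum ‹_› μ
      rw [Finset.sum_insert h, Finset.sum_insert h, ← ih, Measure.prod_add]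

lemma map_fsum' {ι : Type} (s : Finset ι) (μ : ι → Measure (E2 × E2)) {f : E2 × E2 → E2}
    (hf : Measurable f) :
    Measure.map f (∑ i ∈ s, μ i) = ∑ i ∈ s, Measure.map f (μ i) := by
  classical
  induction s using Finset.induction with
  | empty => simp
  | insert _ _ h ih =>
      rw [Finset.sum_insert h, Finset.sum_insert h, ← ih, Measure.map_add _ _ hf]

lemma mconv_eq {ι κ : Type} (s : Finset ι) (u : Finset κ) (x : ι → E2) (y : κ → E2)
    (a b : ℝ≥0∞) :
    mconv (a • ∑ i ∈ s, Measure.dirac (x i)) (b • ∑ j ∈ u, Measure.dirac (y j)) =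
      (a * b) • ∑ i ∈ s, ∑ j ∈ u, Measure.dirac (x i + y j) := by
  have hadd : Measurable (fun p : E2 × E2 => p.1 + p.2) := measurable_add
  haveI := sfinite_fsum s (fun i => Measure.dirac (x i))
  haveI := sfinite_fsum u (fun j => Measure.dirac (y j))
  rw [mconv, prod_smul_left', prod_smul_right', smul_smul, prod_fsum_left]
  rw [Measure.map_smul]
  congr 1
  rw [map_fsum' _ _ hadd]
  refine Finset.sum_congr rfl fun i _ => ?_
  rw [prod_fsum_right, map_fsum' _ _ hadd]
  refine Finset.sum_congr rfl fun j _ => ?_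
  rw [Measure.dirac_prod_dirac, Measure.map_dirac' hadd]

lemma convPow_eq (P : Finset E2) (n : ℕ) :
    convPow (countMeas P) n = ((P.card : ℝ≥0∞) ^ n)⁻¹ •
      ∑ f ∈ Fintype.piFinset (fun _ : Fin n => P), Measure.dirac (∑ i, f i) := by
  induction n with
  | zero =>
      simp only [convPow, pow_zero, inv_one, one_smul]
      rw [Fintype.piFinset_of_isEmpty, Finset.univ_unique, Finset.sum_singleton]
      simp
  | succ k ih =>
      rw [convPow, ih, countMeas, mconv_eq]
      congr 1
      · rw [pow_succ, ENNReal.mul_inv (by simp) (by simp)]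
      · rw [← Finset.sum_product']
        refine Finset.sum_nbij' (fun x => Fin.cons x.2 x.1)
          (fun g => (Fin.tail g, g 0)) ?_ ?_ ?_ ?_ ?_
        · rintro ⟨f, p⟩ hx
          rw [Finset.mem_product] at hx
          rw [Fintype.mem_piFinset]
          intro i
          refine Fin.cases ?_ ?_ i
          · simpa using hx.2
          · intro j; simpa using (Fintype.mem_piFinset.1 hx.1) j
        · intro g hg
          rw [Fintype.mem_piFinset] at hg
          rw [Finset.mem_product]
          exact ⟨Fintype.mem_piFinset.2 fun j => hg _, hg 0⟩
        · rintro ⟨f, p⟩ _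
          simp [Fin.tail_cons]
        · intro g _
          simp [Fin.cons_self_tail]
        · rintro ⟨f, p⟩ _
          rw [Fin.sum_cons, add_comm]

lemma integrable_dirac'' {g : E2 → ℝ} {p : E2} : Integrable g (Measure.dirac p) := by
  have hae : g =ᵐ[Measure.dirac p] (fun _ => g p) := by
    rw [MeasureTheory.ae_dirac_eq]; exact Filter.eventually_pure.2 rfl
  exact (integrable_congr hae).2 (integrable_const _)

lemma mollify_eval (ψ : E2 → ℝ) (δ : ℝ) {ι : Type} (s : Finset ι) (z : ι → E2) (c : ℝ≥0∞)
    (x : E2) :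
    mollify ψ δ (c • ∑ f ∈ s, Measure.dirac (z f)) x
      = c.toReal * ∑ f ∈ s, (δ ^ 2)⁻¹ * ψ (δ⁻¹ • (x - z f)) := by
  rw [mollify, integral_smul_measure,
    integral_finset_sum_measure (fun f _ => integrable_dirac'')]
  simp only [integral_dirac, smul_eq_mul]

set_option maxHeartbeats 1000000000

theorem statement14 :
    ∃ C' : ℝ, 0 < C' ∧
      ∀ ψ : E2 → ℝ, IsApproxId ψ →
      ∀ P : Finset E2, P.Nonempty →
      ∀ t δ : ℝ, 0 < t → 0 < δ →
      ∀ n : ℕ, 1 ≤ n → ∀ C : ℝ, 1 ≤ C →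
        mollE ψ t δ (convPow (countMeas P) n) ≤ ENNReal.ofReal C →
        (Nat.card {pq : (Fin n → E2) × (Fin n → E2) //
            (∀ i, pq.1 i ∈ P) ∧ (∀ i, pq.2 i ∈ P) ∧
            dist (∑ i, pq.1 i) (∑ i, pq.2 i) ≤ δ} : ℝ)
          ≤ C' * C * δ ^ t * (P.card : ℝ) ^ (2 * n) := by
  classical
  refine ⟨256, by norm_num, ?_⟩
  intro ψ hψ P hP t δ ht hδ n hn C hC hE
  obtain ⟨-, -, hψ_lb, -, hψ_nonneg, -⟩ := hψ
  set T : Finset (Fin n → E2) := Fintype.piFinset (fun _ : Fin n => P) with hT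
  set S : (Fin n → E2) → E2 := fun f => ∑ i, f i with hSdef
  have hN0 : 0 < P.card := Finset.card_pos.2 hP
  have hNn : (0:ℝ) < (P.card : ℝ) ^ n := by positivity
  set a : ℝ := (((P.card : ℝ)) ^ n)⁻¹ * (δ ^ 2)⁻¹ with hadef
  have ha0 : 0 < a := by positivity
  have hconv : convPow (countMeas P) n
      = ((P.card : ℝ≥0∞) ^ n)⁻¹ • ∑ f ∈ T, Measure.dirac (S f) := convPow_eq P n
  have hc_toReal : (((P.card : ℝ≥0∞)) ^ n)⁻¹.toReal = (((P.card : ℝ)) ^ n)⁻¹ := by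
    simp [ENNReal.toReal_inv]
  -- lower bound for the mollified density
  have hmoll : ∀ x : E2,
      a * ∑ f ∈ T, (closedBall (S f) (δ/2)).indicator (fun _ => (1:ℝ)) x
        ≤ mollify ψ δ (convPow (countMeas P) n) x := by
    intro x
    rw [hconv, mollify_eval, hc_toReal, Finset.mul_sum, Finset.mul_sum]
    refine Finset.sum_le_sum fun f _ => ?_
    have hind : (closedBall (S f) (δ/2)).indicator (fun _ => (1:ℝ)) x
        ≤ ψ (δ⁻¹ • (x - S f)) := by
      by_cases hx : x ∈ closedBall (S f) (δ/2)
      · rw [Set.indicator_of_mem hx]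
        apply hψ_lb
        rw [norm_smul, norm_inv, Real.norm_eq_abs, abs_of_pos hδ]
        have hd : ‖x - S f‖ ≤ δ/2 := by
          rw [← dist_eq_norm]; exact mem_closedBall.1 hx
        calc δ⁻¹ * ‖x - S f‖ ≤ δ⁻¹ * (δ/2) := by
              exact mul_le_mul_of_nonneg_left hd (by positivity)
          _ = 1/2 := by field_simp
      · rw [Set.indicator_of_notMem hx]; exact hψ_nonneg _
    calc a * (closedBall (S f) (δ/2)).indicator (fun _ => (1:ℝ)) x
        ≤ a * ψ (δ⁻¹ • (x - S f)) := mul_le_mul_of_nonneg_left hind ha0.le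
      _ = (((P.card : ℝ)) ^ n)⁻¹ * ((δ ^ 2)⁻¹ * ψ (δ⁻¹ • (x - S f))) := by
          rw [hadef]; ring
  set Af : ℝ≥0∞ := ENNReal.ofReal a with hAf
  have hMM : ∀ x : E2,
      Af * ∑ f ∈ T, (closedBall (S f) (δ/2)).indicator 1 x
        ≤ ENNReal.ofReal (mollify ψ δ (convPow (countMeas P) n) x) := by
    intro x
    refine le_trans (le_of_eq ?_) (ENNReal.ofReal_le_ofReal (hmoll x))
    rw [ENNReal.ofReal_mul ha0.le,
      ENNReal.ofReal_sum_of_nonneg (fun f _ => Set.indicator_nonneg (fun _ _ => zero_le_one) _)]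
    congr 1
    refine Finset.sum_congr rfl fun f _ => ?_
    by_cases hx : x ∈ closedBall (S f) (δ/2) <;> simp [hx]
  -- the pair set
  set D : Finset ((Fin n → E2) × (Fin n → E2)) :=
    (T ×ˢ T).filter (fun q => dist (S q.1) (S q.2) ≤ δ) with hDdef
  -- geometry
  set m : ((Fin n → E2) × (Fin n → E2)) → E2 := fun q => midpoint ℝ (S q.1) (S q.2) with hm
  set c1 : ((Fin n → E2) × (Fin n → E2)) → E2 := fun q => midpoint ℝ (S q.1) (m q) with hc1
  set c2 : ((Fin n → E2) × (Fin n → E2)) → E2 := fun q => midpoint ℝ (S q.2) (m q) with hc2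
  have htwo : ‖(2:ℝ)‖⁻¹ = 1/2 := by norm_num
  have hdm : ∀ q ∈ D, dist (S q.1) (m q) ≤ δ/2 ∧ dist (S q.2) (m q) ≤ δ/2 := by
    intro q hq
    have hqd : dist (S q.1) (S q.2) ≤ δ := (Finset.mem_filter.1 hq).2
    constructor
    · simp only [hm]
      rw [dist_left_midpoint, htwo]; linarith
    · simp only [hm]
      rw [midpoint_comm, dist_left_midpoint, htwo]
      rw [dist_comm] at hqd; linarith
  have hsub1 : ∀ q ∈ D, closedBall (c1 q) (δ/4) ⊆ closedBall (S q.1) (δ/2) := by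
    intro q hq z hz
    have h1 : dist (c1 q) (S q.1) ≤ δ/4 := by
      simp only [hc1]
      rw [dist_midpoint_left, htwo]
      have := (hdm q hq).1; linarith
    have hz' : dist z (c1 q) ≤ δ/4 := mem_closedBall.1 hz
    exact mem_closedBall.2 (le_trans (dist_triangle z (c1 q) (S q.1)) (by linarith))
  have hsub2 : ∀ q ∈ D, closedBall (c2 q) (δ/4) ⊆ closedBall (S q.2) (δ/2) := by
    intro q hq z hz
    have h1 : dist (c2 q) (S q.2) ≤ δ/4 := by
      simp only [hc2]
      rw [dist_midpoint_left, htwo]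
      have := (hdm q hq).2; linarith
    have hz' : dist z (c2 q) ≤ δ/4 := mem_closedBall.1 hz
    exact mem_closedBall.2 (le_trans (dist_triangle z (c2 q) (S q.2)) (by linarith))
  have hclose : ∀ q ∈ D, ∀ x ∈ closedBall (c1 q) (δ/4), ∀ y ∈ closedBall (c2 q) (δ/4),
      dist x y ≤ δ := by
    intro q hq x hx y hy
    have h1 : dist (c1 q) (m q) ≤ δ/4 := by
      simp only [hc1]
      rw [dist_midpoint_right, htwo]
      have := (hdm q hq).1; linarith
    have h2 : dist (c2 q) (m q) ≤ δ/4 := by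
      simp only [hc2]
      rw [dist_midpoint_right, htwo]
      have := (hdm q hq).2; linarith
    have hx' : dist x (c1 q) ≤ δ/4 := mem_closedBall.1 hx
    have hy' : dist y (c2 q) ≤ δ/4 := mem_closedBall.1 hy
    calc dist x y ≤ dist x (m q) + dist (m q) y := dist_triangle _ _ _
      _ ≤ (dist x (c1 q) + dist (c1 q) (m q)) + (dist y (c2 q) + dist (c2 q) (m q)) := by
          gcongr
          · exact dist_triangle _ _ _
          · rw [dist_comm]; exact dist_triangle _ _ _
      _ ≤ δ := by linarith
  set κ : ℝ≥0∞ := ENNReal.ofReal (δ ^ (-t)) with hκ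
  set J : ((Fin n → E2) × (Fin n → E2)) → E2 → E2 → ℝ≥0∞ := fun q x y =>
    (Af * (closedBall (c1 q) (δ/4)).indicator 1 x) *
    (Af * (closedBall (c2 q) (δ/4)).indicator 1 y) * κ with hJ
  -- pointwise bound
  have hpt : ∀ x y : E2, ∑ q ∈ D, J q x y ≤
      edist x y ^ (-t) * ENNReal.ofReal (mollify ψ δ (convPow (countMeas P) n) x) *
        ENNReal.ofReal (mollify ψ δ (convPow (countMeas P) n) y) := by
    intro x y
    have step1 : ∀ q ∈ D, J q x y ≤
        (Af * (closedBall (S q.1) (δ/2)).indicator 1 x) *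
        (Af * (closedBall (S q.2) (δ/2)).indicator 1 y) *
        edist x y ^ (-t) := by
      intro q hq
      by_cases h1 : x ∈ closedBall (c1 q) (δ/4)
      · by_cases h2 : y ∈ closedBall (c2 q) (δ/4)
        · have hK : κ ≤ edist x y ^ (-t) := by
            have hdist : dist x y ≤ δ := hclose q hq x h1 y h2
            have hbase : edist x y ≤ ENNReal.ofReal δ := by
              rw [edist_dist]; exact ENNReal.ofReal_le_ofReal hdist
            rw [hκ, ← ENNReal.ofReal_rpow_of_pos hδ, ENNReal.rpow_neg, ENNReal.rpow_neg]
            exact ENNReal.inv_le_inv.2 (ENNReal.rpow_le_rpow hbase ht.le)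
          rw [hJ]
          simp only [Set.indicator_of_mem h1, Set.indicator_of_mem h2,
            Set.indicator_of_mem (hsub1 q hq h1), Set.indicator_of_mem (hsub2 q hq h2)]
          exact mul_le_mul' le_rfl hK
        · rw [hJ]; simp [Set.indicator_of_notMem h2]
      · rw [hJ]; simp [Set.indicator_of_notMem h1]
    calc ∑ q ∈ D, J q x y
        ≤ ∑ q ∈ D, (Af * (closedBall (S q.1) (δ/2)).indicator 1 x) *
            (Af * (closedBall (S q.2) (δ/2)).indicator 1 y) *
            edist x y ^ (-t) := Finset.sum_le_sum step1
      _ ≤ ∑ q ∈ T ×ˢ T, (Af * (closedBall (S q.1) (δ/2)).indicator 1 x) *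
            (Af * (closedBall (S q.2) (δ/2)).indicator 1 y) *
            edist x y ^ (-t) := by
          refine Finset.sum_le_sum_of_subset ?_
          rw [hDdef]; exact Finset.filter_subset _ _
      _ = (Af * ∑ f ∈ T, (closedBall (S f) (δ/2)).indicator 1 x) *
            ((Af * ∑ g ∈ T, (closedBall (S g) (δ/2)).indicator 1 y) *
            edist x y ^ (-t)) := by
          rw [Finset.sum_product]
          rw [Finset.mul_sum, Finset.sum_mul]
          refine Finset.sum_congr rfl fun f _ => ?_
          rw [Finset.mul_sum, Finset.sum_mul, Finset.mul_sum]
          refine Finset.sum_congr rfl fun g _ => ?_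
          ring
      _ ≤ ENNReal.ofReal (mollify ψ δ (convPow (countMeas P) n) x) *
            (ENNReal.ofReal (mollify ψ δ (convPow (countMeas P) n) y) *
            edist x y ^ (-t)) := by
          exact mul_le_mul' (hMM x) (mul_le_mul' (hMM y) le_rfl)
      _ = edist x y ^ (-t) * ENNReal.ofReal (mollify ψ δ (convPow (countMeas P) n) x) *
            ENNReal.ofReal (mollify ψ δ (convPow (countMeas P) n) y) := by ring
  -- integrate the lower bound
  have hκtop : κ ≠ ⊤ := by rw [hκ]; exact ENNReal.ofReal_ne_top
  have hAftop : Af ≠ ⊤ := by rw [hAf]; exact ENNReal.ofReal_ne_top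
  set V : ℝ≥0∞ := volume (closedBall (0:E2) (δ/4)) with hV
  have hVball : ∀ z : E2, volume (closedBall z (δ/4)) = V := fun z =>
    Measure.addHaar_closedBall_center volume z _
  have hJint : ∀ q, (∫⁻ x, ∫⁻ y, J q x y) = Af * V * (Af * V) * κ := by
    intro q
    have inner : ∀ x, (∫⁻ y, J q x y) =
        (Af * (closedBall (c1 q) (δ/4)).indicator 1 x) * (Af * V) * κ := by
      intro x
      have : (fun y => J q x y) = fun y =>
          ((Af * (closedBall (c1 q) (δ/4)).indicator 1 x) * κ * Af) *
          (closedBall (c2 q) (δ/4)).indicator 1 y := by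
        funext y; rw [hJ]; ring
      rw [this, lintegral_const_mul' _ _ (by
        exact ENNReal.mul_ne_top (ENNReal.mul_ne_top (ENNReal.mul_ne_top hAftop
          (by by_cases hx : x ∈ closedBall (c1 q) (δ/4) <;> simp [hx])) hκtop) hAftop),
        lintegral_indicator_one measurableSet_closedBall, hVball]
      ring
    rw [lintegral_congr inner]
    have : (fun x => (Af * (closedBall (c1 q) (δ/4)).indicator 1 x) *
        (Af * V) * κ) = fun x =>
          (Af * ((Af * V) * κ)) * (closedBall (c1 q) (δ/4)).indicator 1 x := by
      funext x; ring
    rw [this, lintegral_const_mul' _ _ (by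
        exact ENNReal.mul_ne_top hAftop (ENNReal.mul_ne_top (ENNReal.mul_ne_top hAftop
          (by rw [hV]; exact (measure_closedBall_lt_top).ne)) hκtop)),
      lintegral_indicator_one measurableSet_closedBall, hVball]
    ring
  have hmeasJ : ∀ q (x : E2), Measurable (fun y => J q x y) := by
    intro q x
    apply Measurable.mul
    apply Measurable.mul measurable_const
    · exact (measurable_const.mul
        ((measurable_const.indicator measurableSet_closedBall)))
    · exact measurable_const
  have hEnergy : (D.card : ℝ≥0∞) * (Af * V * (Af * V) * κ) ≤ ENNReal.ofReal C := by
    refine le_trans ?_ hE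
    rw [mollE]
    have h1 : (∫⁻ x, ∫⁻ y, ∑ q ∈ D, J q x y) ≤
        ∫⁻ x, ∫⁻ y, edist x y ^ (-t) *
          ENNReal.ofReal (mollify ψ δ (convPow (countMeas P) n) x) *
          ENNReal.ofReal (mollify ψ δ (convPow (countMeas P) n) y) := by
      refine lintegral_mono fun x => lintegral_mono fun y => hpt x y
    refine le_trans (le_of_eq ?_) h1
    have h2 : (∫⁻ x, ∫⁻ y, ∑ q ∈ D, J q x y) = ∑ q ∈ D, ∫⁻ x, ∫⁻ y, J q x y := by
      rw [lintegral_congr (fun x => lintegral_finset_sum D (fun q _ => hmeasJ q x))]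
      rw [lintegral_finset_sum]
      intro q _
      have : (fun x => ∫⁻ y, J q x y) = fun x =>
          (Af * ((Af*V)*κ)) * (closedBall (c1 q) (δ/4)).indicator 1 x := by
        funext x
        have inner : (∫⁻ y, J q x y) =
            (Af * (closedBall (c1 q) (δ/4)).indicator 1 x) * (Af * V) * κ := by
          have : (fun y => J q x y) = fun y =>
              ((Af * (closedBall (c1 q) (δ/4)).indicator 1 x) * κ * Af) *
              (closedBall (c2 q) (δ/4)).indicator 1 y := by
            funext y; rw [hJ]; ring
          rw [this, lintegral_const_mul' _ _ (by
            exact ENNReal.mul_ne_top (ENNReal.mul_ne_top (ENNReal.mul_ne_top hAftop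
              (by by_cases hx : x ∈ closedBall (c1 q) (δ/4) <;> simp [hx])) hκtop) hAftop),
            lintegral_indicator_one measurableSet_closedBall, hVball]
          ring
        rw [inner]; ring
      rw [this]
      exact measurable_const.mul (measurable_const.indicator measurableSet_closedBall)
    rw [h2, Finset.sum_congr rfl (fun q _ => hJint q), Finset.sum_const, nsmul_eq_mul]
  -- compute V and convert to reals
  have hVval : V = ENNReal.ofReal ((δ/4)^2 * Real.pi) := by
    rw [hV, EuclideanSpace.volume_closedBall]
    rw [show Fintype.card (Fin 2) = 2 from by simp]
    rw [show ((2:ℕ):ℝ)/2 + 1 = 2 from by norm_num, Real.Gamma_two,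
      show Real.sqrt Real.pi ^ 2 / 1 = Real.pi from by
        rw [Real.sq_sqrt Real.pi_pos.le, div_one]]
    rw [← ENNReal.ofReal_pow (by positivity), ← ENNReal.ofReal_mul (by positivity)]
  have hC0 : (0:ℝ) ≤ C := by linarith
  have hw0 : (0:ℝ) ≤ a * ((δ/4)^2 * Real.pi) := by positivity
  have e1 : Af * V = ENNReal.ofReal (a * ((δ/4)^2 * Real.pi)) := by
    rw [hAf, hVval, ENNReal.ofReal_mul ha0.le]
  have hreal : (D.card : ℝ) * (a * ((δ/4)^2 * Real.pi) * (a * ((δ/4)^2 * Real.pi)) * δ ^ (-t))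
      ≤ C := by
    rw [← ENNReal.ofReal_le_ofReal_iff hC0]
    refine le_trans (le_of_eq ?_) hEnergy
    rw [ENNReal.ofReal_mul (show (0:ℝ) ≤ (D.card:ℝ) from Nat.cast_nonneg _),
      ENNReal.ofReal_mul (mul_nonneg hw0 hw0), ENNReal.ofReal_mul hw0,
      ENNReal.ofReal_natCast, e1, hκ]
  -- final real arithmetic
  have hcard : (Nat.card {pq : (Fin n → E2) × (Fin n → E2) //
      (∀ i, pq.1 i ∈ P) ∧ (∀ i, pq.2 i ∈ P) ∧
      dist (∑ i, pq.1 i) (∑ i, pq.2 i) ≤ δ} : ℕ) = D.card := by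
    have hiff : ∀ pq : (Fin n → E2) × (Fin n → E2),
        ((∀ i, pq.1 i ∈ P) ∧ (∀ i, pq.2 i ∈ P) ∧
          dist (∑ i, pq.1 i) (∑ i, pq.2 i) ≤ δ) ↔ pq ∈ D := by
      intro pq
      rw [hDdef, Finset.mem_filter, Finset.mem_product, hT]
      simp only [Fintype.mem_piFinset, hSdef]
      tauto
    rw [Nat.card_congr (Equiv.subtypeEquivRight hiff), Nat.card_eq_fintype_card,
      Fintype.card_coe]
  rw [hcard]
  have hu : (0:ℝ) < δ ^ t := Real.rpow_pos_of_pos hδ t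
  have hut : δ ^ (-t) = (δ ^ t)⁻¹ := Real.rpow_neg hδ.le t
  have hd0 : (0:ℝ) ≤ (D.card : ℝ) := Nat.cast_nonneg _
  have haval : a * ((δ/4)^2 * Real.pi) = Real.pi / (16 * (P.card : ℝ) ^ n) := by
    rw [hadef]; field_simp; ring
  rw [haval, hut] at hreal
  have hpow : ((P.card : ℝ)) ^ (2 * n) = ((P.card : ℝ) ^ n) ^ 2 := by
    rw [two_mul, pow_add, sq]
  rw [hpow]
  set d : ℝ := (D.card : ℝ)
  set Nn : ℝ := ((P.card : ℝ)) ^ n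
  have hπ : (3:ℝ) < Real.pi := Real.pi_gt_three
  -- hreal : d * (π/(16 Nn) * (π/(16 Nn)) * (δ^t)⁻¹) ≤ C
  have key2 : d * Real.pi ^ 2 ≤ 256 * C * δ ^ t * Nn ^ 2 := by
    have h := mul_le_mul_of_nonneg_right hreal
      (by positivity : (0:ℝ) ≤ δ ^ t * (16 * Nn)^2)
    calc d * Real.pi ^ 2
        = d * (Real.pi / (16 * Nn) * (Real.pi / (16 * Nn)) * (δ ^ t)⁻¹) *
            (δ ^ t * (16 * Nn)^2) := by
          field_simp
      _ ≤ C * (δ ^ t * (16 * Nn)^2) := h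
      _ = 256 * C * δ ^ t * Nn ^ 2 := by ring
  nlinarith [sq_nonneg Real.pi, mul_nonneg hd0 (by nlinarith : (0:ℝ) ≤ Real.pi ^ 2 - 1)]
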